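/- arXiv:2503.03055 — 2 statements merged into one kernel-verified Lean document; each statement's English description precedes it below -/
import Mathlib

section
/- For all integers n ≥ 2 and m ≥ 2, the Hosoya polynomial of the Mycielskian of the complete bipartite graph K_{n,m} is H(μ(K_{n,m}), x) = (3nm + n + m)x + (2n² + 2m² + nm)x². -/
open SimpleGraph Polynomial Finset

/-- The Mycielskian `μ(G)` of a simple graph `G`. Vertices `Sum.inl v` are the original
vertices `v_i`, vertices `Sum.inr (Sum.inl v)` are the shadow vertices `u_i`, and
`Sum.inr (Sum.inr ())` is the apex vertex `w`.  Edges: the edges of `G`, the edges `w u_i`,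
and the edges `u_i v_j`, `u_j v_i` for every edge `v_i v_j` of `G`. -/
def mycielskian {V : Type*} (G : SimpleGraph V) : SimpleGraph (V ⊕ V ⊕ Unit) :=
  SimpleGraph.fromRel (fun a b =>
    match a, b with
    | Sum.inl a, Sum.inl b => G.Adj a b
    | Sum.inl a, Sum.inr (Sum.inl b) => G.Adj a b
    | Sum.inr (Sum.inl _), Sum.inr (Sum.inr _) => True
    | _, _ => False)

/-- `distCount G k` is `d(G,k)`, the number of unordered pairs of distinct vertices of `G`
whose graph distance is exactly `k`. -/
noncomputable def distCount {V : Type*} (G : SimpleGraph V) (k : ℕ) : ℕ :=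
  Nat.card {e : Sym2 V // ¬ e.IsDiag ∧ Sym2.lift ⟨G.dist, fun _ _ => G.dist_comm⟩ e = k}

/-- The Hosoya polynomial `H(G,x) = Σ_{k=1}^{D(G)} d(G,k) x^k` (with rational coefficients). -/
noncomputable def hosoya {V : Type*} (G : SimpleGraph V) : Polynomial ℚ :=
  ∑ k ∈ Finset.Icc 1 G.diam, (distCount G k : ℚ) • Polynomial.X ^ k

/-- The Wiener index `W(G)`: the sum of distances over all unordered pairs of distinct
vertices (the diagonal contributes `0`, so we may sum over ordered pairs and halve). -/
noncomputable def wiener {V : Type*} (G : SimpleGraph V) [Fintype V] : ℚ :=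
  (∑ u : V, ∑ v : V, (G.dist u v : ℚ)) / 2

/-- The Hyper-Wiener index `WW(G) = (1/2) Σ_{{u,v}} (d(u,v)² + d(u,v))`. -/
noncomputable def hyperWiener {V : Type*} (G : SimpleGraph V) [Fintype V] : ℚ :=
  (∑ u : V, ∑ v : V, ((G.dist u v : ℚ) ^ 2 + (G.dist u v : ℚ))) / 4

/-- The TSZ index `TSZ(G) = (1/6) Σ_{{u,v}} d³ + (1/2) Σ_{{u,v}} d² + (1/3) Σ_{{u,v}} d`. -/
noncomputable def tszIndex {V : Type*} (G : SimpleGraph V) [Fintype V] : ℚ :=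
  (∑ u : V, ∑ v : V, (G.dist u v : ℚ) ^ 3) / 12
    + (∑ u : V, ∑ v : V, (G.dist u v : ℚ) ^ 2) / 4
    + (∑ u : V, ∑ v : V, (G.dist u v : ℚ)) / 6

/-- The Harary index `Har(G) = Σ_{{u,v}} 1/d(u,v)` (diagonal terms are `0⁻¹ = 0`). -/
noncomputable def harary {V : Type*} (G : SimpleGraph V) [Fintype V] : ℚ :=
  (∑ u : V, ∑ v : V, ((G.dist u v : ℚ))⁻¹) / 2

/-- The closeness `C(G) = Σ_u Σ_{v ≠ u} 2^{-d(u,v)}` over ordered pairs of distinct vertices. -/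
noncomputable def closeness {V : Type*} (G : SimpleGraph V) [Fintype V] : ℚ :=
  letI := Classical.decEq V
  ∑ u : V, ∑ v : V, if v = u then 0 else ((1 : ℚ) / 2) ^ (G.dist u v)

/-- `σ_{uv}`: the number of shortest paths (walks of length `dist u v`) from `u` to `v`. -/
noncomputable def numSP {V : Type*} (G : SimpleGraph V) (u v : V) : ℕ :=
  Nat.card {p : G.Walk u v // p.length = G.dist u v}

/-- `σ_{uv}(w)`: the number of shortest paths from `u` to `v` passing through `w`. -/
noncomputable def numSPthrough {V : Type*} (G : SimpleGraph V) (w u v : V) : ℕ :=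
  Nat.card {p : G.Walk u v // p.length = G.dist u v ∧ w ∈ p.support}

/-- The betweenness centrality `B_w = Σ_{{u,v}, u ≠ w ≠ v} σ_{uv}(w)/σ_{uv}` of a vertex `w`,
summed over unordered pairs of distinct vertices (ordered pairs, halved). -/
noncomputable def btwVertex {V : Type*} (G : SimpleGraph V) [Fintype V] (w : V) : ℚ :=
  letI := Classical.decEq V
  (∑ u : V, ∑ v : V,
    if u ≠ v ∧ u ≠ w ∧ v ≠ w then (numSPthrough G w u v : ℚ) / (numSP G u v) else 0) / 2

/-- The betweenness centrality of a graph: `B⁻(G) = (1/N) Σ_w B_w`. -/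
noncomputable def btw {V : Type*} (G : SimpleGraph V) [Fintype V] : ℚ :=
  (∑ w : V, btwVertex G w) / (Fintype.card V)

/-- The star graph `S_n`: center `0` joined to the `n` leaves `1, …, n`. -/
def starGraph (n : ℕ) : SimpleGraph (Fin (n + 1)) :=
  SimpleGraph.fromRel (fun a _ => a = 0)

/-- The join `G₁ ⊕ G₂` of two graphs on disjoint vertex sets: all edges of `G₁`, all edges
of `G₂`, and all edges between `V(G₁)` and `V(G₂)`. -/
def joinGraph {V₁ V₂ : Type*} (G₁ : SimpleGraph V₁) (G₂ : SimpleGraph V₂) :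
    SimpleGraph (V₁ ⊕ V₂) :=
  SimpleGraph.fromRel (fun a b =>
    match a, b with
    | Sum.inl a, Sum.inl b => G₁.Adj a b
    | Sum.inr a, Sum.inr b => G₂.Adj a b
    | Sum.inl _, Sum.inr _ => True
    | _, _ => False)

-- auxiliary explicit adjacency
def eAdj {n m : ℕ} : ((Fin n ⊕ Fin m) ⊕ ((Fin n ⊕ Fin m) ⊕ Unit)) →
    ((Fin n ⊕ Fin m) ⊕ ((Fin n ⊕ Fin m) ⊕ Unit)) → Bool
  | Sum.inl (Sum.inl _), Sum.inl (Sum.inr _) => true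
  | Sum.inl (Sum.inr _), Sum.inl (Sum.inl _) => true
  | Sum.inl (Sum.inl _), Sum.inr (Sum.inl (Sum.inr _)) => true
  | Sum.inr (Sum.inl (Sum.inr _)), Sum.inl (Sum.inl _) => true
  | Sum.inl (Sum.inr _), Sum.inr (Sum.inl (Sum.inl _)) => true
  | Sum.inr (Sum.inl (Sum.inl _)), Sum.inl (Sum.inr _) => true
  | Sum.inr (Sum.inl _), Sum.inr (Sum.inr _) => true
  | Sum.inr (Sum.inr _), Sum.inl (Sum.inl _) => false
  | Sum.inr (Sum.inr _), Sum.inr (Sum.inl _) => true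
  | _, _ => false

abbrev MG (n m : ℕ) := mycielskian (completeBipartiteGraph (Fin n) (Fin m))

lemma adj_iff {n m : ℕ} (u v : (Fin n ⊕ Fin m) ⊕ ((Fin n ⊕ Fin m) ⊕ Unit)) :
    (MG n m).Adj u v ↔ eAdj u v = true := by
  rcases u with (i|i)|((i|i)|⟨⟩) <;> rcases v with (j|j)|((j|j)|⟨⟩) <;>
    simp [mycielskian, eAdj, Sum.inl.injEq, Sum.inr.injEq, ne_eq]

lemma exists_common {n m : ℕ} (hn : 2 ≤ n) (hm : 2 ≤ m)
    (u v : (Fin n ⊕ Fin m) ⊕ ((Fin n ⊕ Fin m) ⊕ Unit)) (hne : u ≠ v)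
    (hna : ¬ (MG n m).Adj u v) :
    ∃ w, (MG n m).Adj u w ∧ (MG n m).Adj w v := by
  have hn0 : 0 < n := by omega
  have hm0 : 0 < m := by omega
  rcases u with (i|i)|((i|i)|⟨⟩) <;> rcases v with (j|j)|((j|j)|⟨⟩)
  · exact ⟨Sum.inl (Sum.inr ⟨0, hm0⟩), (adj_iff _ _).mpr rfl, (adj_iff _ _).mpr rfl⟩
  · exact (hna ((adj_iff _ _).mpr rfl)).elim
  · exact ⟨Sum.inl (Sum.inr ⟨0, hm0⟩), (adj_iff _ _).mpr rfl, (adj_iff _ _).mpr rfl⟩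
  · exact (hna ((adj_iff _ _).mpr rfl)).elim
  · exact ⟨Sum.inr (Sum.inl (Sum.inr ⟨0, hm0⟩)), (adj_iff _ _).mpr rfl, (adj_iff _ _).mpr rfl⟩
  · exact (hna ((adj_iff _ _).mpr rfl)).elim
  · exact ⟨Sum.inl (Sum.inl ⟨0, hn0⟩), (adj_iff _ _).mpr rfl, (adj_iff _ _).mpr rfl⟩
  · exact (hna ((adj_iff _ _).mpr rfl)).elim
  · exact ⟨Sum.inl (Sum.inl ⟨0, hn0⟩), (adj_iff _ _).mpr rfl, (adj_iff _ _).mpr rfl⟩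
  · exact ⟨Sum.inr (Sum.inl (Sum.inl ⟨0, hn0⟩)), (adj_iff _ _).mpr rfl, (adj_iff _ _).mpr rfl⟩
  · exact ⟨Sum.inl (Sum.inr ⟨0, hm0⟩), (adj_iff _ _).mpr rfl, (adj_iff _ _).mpr rfl⟩
  · exact (hna ((adj_iff _ _).mpr rfl)).elim
  · exact ⟨Sum.inr (Sum.inr ()), (adj_iff _ _).mpr rfl, (adj_iff _ _).mpr rfl⟩
  · exact ⟨Sum.inr (Sum.inr ()), (adj_iff _ _).mpr rfl, (adj_iff _ _).mpr rfl⟩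
  · exact (hna ((adj_iff _ _).mpr rfl)).elim
  · exact (hna ((adj_iff _ _).mpr rfl)).elim
  · exact ⟨Sum.inl (Sum.inl ⟨0, hn0⟩), (adj_iff _ _).mpr rfl, (adj_iff _ _).mpr rfl⟩
  · exact ⟨Sum.inr (Sum.inr ()), (adj_iff _ _).mpr rfl, (adj_iff _ _).mpr rfl⟩
  · exact ⟨Sum.inr (Sum.inr ()), (adj_iff _ _).mpr rfl, (adj_iff _ _).mpr rfl⟩
  · exact (hna ((adj_iff _ _).mpr rfl)).elim
  · exact ⟨Sum.inr (Sum.inl (Sum.inr ⟨0, hm0⟩)), (adj_iff _ _).mpr rfl, (adj_iff _ _).mpr rfl⟩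
  · exact ⟨Sum.inr (Sum.inl (Sum.inl ⟨0, hn0⟩)), (adj_iff _ _).mpr rfl, (adj_iff _ _).mpr rfl⟩
  · exact (hna ((adj_iff _ _).mpr rfl)).elim
  · exact (hna ((adj_iff _ _).mpr rfl)).elim
  · exact absurd (congrArg (fun x => Sum.inr (Sum.inr x)) (Subsingleton.elim _ _)) hne

lemma dist_eq_two {n m : ℕ} (hn : 2 ≤ n) (hm : 2 ≤ m)
    {u v : (Fin n ⊕ Fin m) ⊕ ((Fin n ⊕ Fin m) ⊕ Unit)} (hne : u ≠ v)
    (hna : ¬ (MG n m).Adj u v) : (MG n m).dist u v = 2 := by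
  obtain ⟨w, h1, h2⟩ := exists_common hn hm u v hne hna
  have hle : (MG n m).dist u v ≤ 2 := by
    have := SimpleGraph.dist_le (Walk.cons h1 (Walk.cons h2 Walk.nil))
    simpa using this
  have h0 : (MG n m).dist u v ≠ 0 :=
    SimpleGraph.dist_ne_zero_iff_ne_and_reachable.mpr ⟨hne, ⟨Walk.cons h1 (Walk.cons h2 Walk.nil)⟩⟩
  have h1' : (MG n m).dist u v ≠ 1 := fun h => hna (SimpleGraph.dist_eq_one_iff_adj.mp h)
  omega

lemma dist_le_two {n m : ℕ} (hn : 2 ≤ n) (hm : 2 ≤ m)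
    (u v : (Fin n ⊕ Fin m) ⊕ ((Fin n ⊕ Fin m) ⊕ Unit)) : (MG n m).dist u v ≤ 2 := by
  by_cases hne : u = v
  · subst hne; rw [SimpleGraph.dist_self]; omega
  by_cases ha : (MG n m).Adj u v
  · rw [SimpleGraph.dist_eq_one_iff_adj.mpr ha]; omega
  · rw [dist_eq_two hn hm hne ha]

lemma edist_le_two {n m : ℕ} (hn : 2 ≤ n) (hm : 2 ≤ m)
    (u v : (Fin n ⊕ Fin m) ⊕ ((Fin n ⊕ Fin m) ⊕ Unit)) : (MG n m).edist u v ≤ 2 := by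
  by_cases hne : u = v
  · subst hne; simp
  by_cases ha : (MG n m).Adj u v
  · have := SimpleGraph.edist_le ha.toWalk
    simpa using this.trans (by norm_num)
  · obtain ⟨w, h1, h2⟩ := exists_common hn hm u v hne ha
    have := SimpleGraph.edist_le (Walk.cons h1 (Walk.cons h2 Walk.nil))
    simpa using this

lemma diam_eq_two {n m : ℕ} (hn : 2 ≤ n) (hm : 2 ≤ m) : (MG n m).diam = 2 := by
  have htop : (MG n m).ediam ≠ ⊤ := by
    have := SimpleGraph.ediam_le_of_edist_le (G := MG n m) (edist_le_two hn hm)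
    intro h; rw [h] at this; exact absurd this (by norm_num)
  have hne : (Sum.inl (Sum.inl ⟨0, by omega⟩) : (Fin n ⊕ Fin m) ⊕ ((Fin n ⊕ Fin m) ⊕ Unit))
      ≠ Sum.inl (Sum.inl ⟨1, by omega⟩) := by simp [Fin.ext_iff]
  have hna : ¬ (MG n m).Adj (Sum.inl (Sum.inl ⟨0, by omega⟩)) (Sum.inl (Sum.inl ⟨1, by omega⟩)) := by
    rw [adj_iff]
    exact fun h => nomatch h
  have h2 : (MG n m).dist (Sum.inl (Sum.inl ⟨0, by omega⟩)) (Sum.inl (Sum.inl ⟨1, by omega⟩)) = 2 :=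
    dist_eq_two hn hm hne hna
  have hge : 2 ≤ (MG n m).diam := h2 ▸ SimpleGraph.dist_le_diam htop
  have hle : (MG n m).diam ≤ 2 := by
    obtain ⟨u, v, huv⟩ := SimpleGraph.exists_dist_eq_diam (G := MG n m)
    rw [← huv]; exact dist_le_two hn hm u v
  omega

lemma two_mul_card_sym2 {V : Type*} [Fintype V] [DecidableEq V]
    (Q : Sym2 V → Prop) [DecidablePred Q] (hQ : ∀ e, Q e → ¬ e.IsDiag) :
    (univ.filter fun p : V × V => Q s(p.1, p.2)).card = 2 * (univ.filter Q).card := by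
  rw [Finset.card_eq_sum_card_fiberwise
    (f := fun p : V × V => s(p.1, p.2)) (t := univ.filter Q)
    (fun p hp => by simpa using (Finset.mem_filter.mp hp).2)]
  rw [Finset.sum_congr rfl (fun e he => ?_), Finset.sum_const, smul_eq_mul, mul_comm]
  revert he
  refine Sym2.ind (fun a b he => ?_) e
  have hQe : Q s(a, b) := (Finset.mem_filter.mp he).2
  have hab : a ≠ b := fun h => hQ _ hQe (by simp [h])
  have hset : ((univ.filter fun p : V × V => Q s(p.1, p.2)).filter
      (fun p => s(p.1, p.2) = s(a, b))) = {(a, b), (b, a)} := by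
    ext ⟨x, y⟩
    simp only [Finset.mem_filter, Finset.mem_univ, true_and, Finset.mem_insert,
      Finset.mem_singleton, Prod.mk.injEq, Sym2.eq_iff]
    constructor
    · rintro ⟨_, (⟨rfl, rfl⟩ | ⟨rfl, rfl⟩)⟩
      · exact Or.inl ⟨rfl, rfl⟩
      · exact Or.inr ⟨rfl, rfl⟩
    · rintro (⟨rfl, rfl⟩ | ⟨rfl, rfl⟩)
      · exact ⟨hQe, Or.inl ⟨rfl, rfl⟩⟩
      · exact ⟨by rwa [Sym2.eq_swap], Or.inr ⟨rfl, rfl⟩⟩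
  rw [hset, Finset.card_insert_of_notMem (by simp [Prod.ext_iff, hab]),
    Finset.card_singleton]

lemma card_adj (n m : ℕ) :
    (univ.filter fun p : ((Fin n ⊕ Fin m) ⊕ ((Fin n ⊕ Fin m) ⊕ Unit)) ×
        ((Fin n ⊕ Fin m) ⊕ ((Fin n ⊕ Fin m) ⊕ Unit)) => eAdj p.1 p.2 = true).card
      = 6 * (n * m) + 2 * n + 2 * m := by
  rw [Finset.card_filter]
  rw [Fintype.sum_prod_type]
  simp only [Fintype.sum_sum_type, Fintype.sum_unique, eAdj]
  simp
  ring

open Classical in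
lemma distCount_eq_card {V : Type*} [Fintype V] (G : SimpleGraph V) (k : ℕ) :
    distCount G k = (univ.filter fun e : Sym2 V =>
      ¬ e.IsDiag ∧ Sym2.lift ⟨G.dist, fun _ _ => G.dist_comm⟩ e = k).card := by
  rw [distCount, Nat.card_eq_fintype_card]
  convert Fintype.card_subtype _

open Classical in
lemma two_mul_distCount {V : Type*} [Fintype V] (G : SimpleGraph V) (k : ℕ) (hk : k ≠ 0) :
    2 * distCount G k =
      (univ.filter fun p : V × V => p.1 ≠ p.2 ∧ G.dist p.1 p.2 = k).card := by
  rw [distCount_eq_card]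
  rw [← two_mul_card_sym2 (fun e : Sym2 V =>
      ¬ e.IsDiag ∧ Sym2.lift ⟨G.dist, fun _ _ => G.dist_comm⟩ e = k) (fun e he => he.1)]
  congr 1
  apply Finset.filter_congr
  intro p _
  obtain ⟨a, b⟩ := p
  simp [Sym2.isDiag_iff_proj_eq]

lemma distCount_one_val {n m : ℕ} (hn : 2 ≤ n) (hm : 2 ≤ m) :
    distCount (MG n m) 1 = 3 * (n * m) + n + m := by
  have h2 : 2 * distCount (MG n m) 1 =
      (univ.filter fun p : ((Fin n ⊕ Fin m) ⊕ ((Fin n ⊕ Fin m) ⊕ Unit)) ×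
        ((Fin n ⊕ Fin m) ⊕ ((Fin n ⊕ Fin m) ⊕ Unit)) =>
        p.1 ≠ p.2 ∧ (MG n m).dist p.1 p.2 = 1).card := by
    rw [two_mul_distCount _ 1 one_ne_zero]
    congr!
  have heq : (univ.filter fun p : ((Fin n ⊕ Fin m) ⊕ ((Fin n ⊕ Fin m) ⊕ Unit)) ×
        ((Fin n ⊕ Fin m) ⊕ ((Fin n ⊕ Fin m) ⊕ Unit)) =>
        p.1 ≠ p.2 ∧ (MG n m).dist p.1 p.2 = 1).card
      = (univ.filter fun p : ((Fin n ⊕ Fin m) ⊕ ((Fin n ⊕ Fin m) ⊕ Unit)) ×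
        ((Fin n ⊕ Fin m) ⊕ ((Fin n ⊕ Fin m) ⊕ Unit)) => eAdj p.1 p.2 = true).card := by
    congr 1
    apply Finset.filter_congr
    intro p _
    rw [← adj_iff]
    constructor
    · exact fun h => SimpleGraph.dist_eq_one_iff_adj.mp h.2
    · exact fun h => ⟨h.ne, SimpleGraph.dist_eq_one_iff_adj.mpr h⟩
  rw [heq, card_adj] at h2
  have : n * m = n * m := rfl
  generalize hA : n * m = a at h2 ⊢
  omega

lemma distCount_two_val {n m : ℕ} (hn : 2 ≤ n) (hm : 2 ≤ m) :
    distCount (MG n m) 2 = 2 * n ^ 2 + 2 * m ^ 2 + n * m := by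
  have h2 : 2 * distCount (MG n m) 2 =
      (univ.filter fun p : ((Fin n ⊕ Fin m) ⊕ ((Fin n ⊕ Fin m) ⊕ Unit)) ×
        ((Fin n ⊕ Fin m) ⊕ ((Fin n ⊕ Fin m) ⊕ Unit)) =>
        p.1 ≠ p.2 ∧ (MG n m).dist p.1 p.2 = 2).card := by
    rw [two_mul_distCount _ 2 two_ne_zero]
    congr!
  have heq : (univ.filter fun p : ((Fin n ⊕ Fin m) ⊕ ((Fin n ⊕ Fin m) ⊕ Unit)) ×
        ((Fin n ⊕ Fin m) ⊕ ((Fin n ⊕ Fin m) ⊕ Unit)) =>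
        p.1 ≠ p.2 ∧ (MG n m).dist p.1 p.2 = 2).card
      = (univ.filter fun p : ((Fin n ⊕ Fin m) ⊕ ((Fin n ⊕ Fin m) ⊕ Unit)) ×
        ((Fin n ⊕ Fin m) ⊕ ((Fin n ⊕ Fin m) ⊕ Unit)) =>
          p.1 ≠ p.2 ∧ ¬ eAdj p.1 p.2 = true).card := by
    congr 1
    apply Finset.filter_congr
    intro p _
    rw [← adj_iff]
    constructor
    · rintro ⟨hne, hd⟩
      exact ⟨hne, fun ha => by rw [SimpleGraph.dist_eq_one_iff_adj.mpr ha] at hd; omega⟩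
    · rintro ⟨hne, hna⟩
      exact ⟨hne, dist_eq_two hn hm hne hna⟩
  -- split the off-diagonal pairs into adjacent and non-adjacent
  have hsplit : (univ.filter fun p : ((Fin n ⊕ Fin m) ⊕ ((Fin n ⊕ Fin m) ⊕ Unit)) ×
        ((Fin n ⊕ Fin m) ⊕ ((Fin n ⊕ Fin m) ⊕ Unit)) => p.1 ≠ p.2 ∧ eAdj p.1 p.2 = true).card
      + (univ.filter fun p : ((Fin n ⊕ Fin m) ⊕ ((Fin n ⊕ Fin m) ⊕ Unit)) ×
        ((Fin n ⊕ Fin m) ⊕ ((Fin n ⊕ Fin m) ⊕ Unit)) => p.1 ≠ p.2 ∧ ¬ eAdj p.1 p.2 = true).card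
      = (univ.filter fun p : ((Fin n ⊕ Fin m) ⊕ ((Fin n ⊕ Fin m) ⊕ Unit)) ×
        ((Fin n ⊕ Fin m) ⊕ ((Fin n ⊕ Fin m) ⊕ Unit)) => p.1 ≠ p.2).card := by
    rw [← Finset.filter_filter, ← Finset.filter_filter]
    exact Finset.card_filter_add_card_filter_not _
  have hadj : (univ.filter fun p : ((Fin n ⊕ Fin m) ⊕ ((Fin n ⊕ Fin m) ⊕ Unit)) ×
        ((Fin n ⊕ Fin m) ⊕ ((Fin n ⊕ Fin m) ⊕ Unit)) => p.1 ≠ p.2 ∧ eAdj p.1 p.2 = true)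
      = (univ.filter fun p : ((Fin n ⊕ Fin m) ⊕ ((Fin n ⊕ Fin m) ⊕ Unit)) ×
        ((Fin n ⊕ Fin m) ⊕ ((Fin n ⊕ Fin m) ⊕ Unit)) => eAdj p.1 p.2 = true) := by
    apply Finset.filter_congr
    intro p _
    constructor
    · exact fun h => h.2
    · exact fun h => ⟨((adj_iff _ _).mpr h).ne, h⟩
  have hoff : (univ.filter fun p : ((Fin n ⊕ Fin m) ⊕ ((Fin n ⊕ Fin m) ⊕ Unit)) ×
        ((Fin n ⊕ Fin m) ⊕ ((Fin n ⊕ Fin m) ⊕ Unit)) => p.1 ≠ p.2).card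
      = (2 * n + 2 * m + 1) * (2 * n + 2 * m) := by
    have : (univ.filter fun p : ((Fin n ⊕ Fin m) ⊕ ((Fin n ⊕ Fin m) ⊕ Unit)) ×
        ((Fin n ⊕ Fin m) ⊕ ((Fin n ⊕ Fin m) ⊕ Unit)) => p.1 ≠ p.2)
        = (univ : Finset ((Fin n ⊕ Fin m) ⊕ ((Fin n ⊕ Fin m) ⊕ Unit))).offDiag := by
      ext p; simp [Finset.mem_offDiag]
    rw [this, Finset.offDiag_card, Finset.card_univ]
    have hcard : Fintype.card ((Fin n ⊕ Fin m) ⊕ ((Fin n ⊕ Fin m) ⊕ Unit)) = 2 * n + 2 * m + 1 := by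
      simp [Fintype.card_sum]; ring
    rw [hcard]
    have : (2 * n + 2 * m + 1) * (2 * n + 2 * m + 1) = (2 * n + 2 * m + 1) * (2 * n + 2 * m)
        + (2 * n + 2 * m + 1) := by ring
    omega
  rw [heq] at h2
  rw [hadj, card_adj] at hsplit
  rw [← h2, hoff] at hsplit
  have hkey : (2 * n + 2 * m + 1) * (2 * n + 2 * m)
      = (6 * (n * m) + 2 * n + 2 * m) + 2 * (2 * n ^ 2 + 2 * m ^ 2 + n * m) := by ring
  rw [hkey] at hsplit
  generalize hA : n * m = a at hsplit ⊢
  generalize hB : n ^ 2 = b at hsplit ⊢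
  generalize hC : m ^ 2 = c at hsplit ⊢
  omega

/-- For `n, m ≥ 2`, `H(μ(K_{n,m}), x) = (3nm+n+m)x + (2n²+2m²+nm)x²`. -/
theorem stmt_6 (n m : ℕ) (hn : 2 ≤ n) (hm : 2 ≤ m) :
    hosoya (mycielskian (completeBipartiteGraph (Fin n) (Fin m))) =
      Polynomial.C ((3 * (n * m) + n + m : ℕ) : ℚ) * Polynomial.X +
        Polynomial.C ((2 * n ^ 2 + 2 * m ^ 2 + n * m : ℕ) : ℚ) * Polynomial.X ^ 2 := by
  rw [hosoya]
  rw [show (mycielskian (completeBipartiteGraph (Fin n) (Fin m))).diam = 2 from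
    diam_eq_two hn hm]
  rw [show Finset.Icc 1 2 = ({1, 2} : Finset ℕ) from rfl]
  rw [Finset.sum_insert (by decide), Finset.sum_singleton]
  rw [distCount_one_val hn hm, distCount_two_val hn hm]
  rw [pow_one, Polynomial.smul_eq_C_mul, Polynomial.smul_eq_C_mul]
end

section
/- Let G be a simple connected graph with n ≥ 2 vertices and m edges, and write a_k = d(G,k). Then the TSZ index of the Mycielskian of G is TSZ(μ(G)) = 22n² − 13n − 37m − 28a_2 − 10a_3. -/
open SimpleGraph Polynomial Finset

section Adj
variable {V : Type*} (G : SimpleGraph V)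

abbrev myW : V ⊕ V ⊕ Unit := Sum.inr (Sum.inr ())

@[simp] lemma myc_adj_vv {i j : V} : (mycielskian G).Adj (Sum.inl i) (Sum.inl j) ↔ G.Adj i j := by
  simp only [mycielskian, fromRel_adj]
  constructor
  · rintro ⟨-, h | h⟩
    · exact h
    · exact h.symm
  · intro h; exact ⟨by simp [h.ne], Or.inl h⟩

@[simp] lemma myc_adj_vu {i j : V} :
    (mycielskian G).Adj (Sum.inl i) (Sum.inr (Sum.inl j)) ↔ G.Adj i j := by
  simp [mycielskian, fromRel_adj]

@[simp] lemma myc_adj_uv {i j : V} :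
    (mycielskian G).Adj (Sum.inr (Sum.inl i)) (Sum.inl j) ↔ G.Adj j i := by
  simp [mycielskian, fromRel_adj]

@[simp] lemma myc_adj_uu {i j : V} :
    ¬ (mycielskian G).Adj (Sum.inr (Sum.inl i)) (Sum.inr (Sum.inl j)) := by
  simp [mycielskian, fromRel_adj]

@[simp] lemma myc_adj_uw {i : V} :
    (mycielskian G).Adj (Sum.inr (Sum.inl i)) (myW : V ⊕ V ⊕ Unit) := by
  simp [mycielskian, fromRel_adj]

@[simp] lemma myc_adj_wu {i : V} :
    (mycielskian G).Adj (myW : V ⊕ V ⊕ Unit) (Sum.inr (Sum.inl i)) := by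
  simp [mycielskian, fromRel_adj]

@[simp] lemma myc_adj_vw {i : V} :
    ¬ (mycielskian G).Adj (Sum.inl i) (myW : V ⊕ V ⊕ Unit) := by
  simp [mycielskian, fromRel_adj]

@[simp] lemma myc_adj_wv {i : V} :
    ¬ (mycielskian G).Adj (myW : V ⊕ V ⊕ Unit) (Sum.inl i) := by
  simp [mycielskian, fromRel_adj]

/-- embedding hom -/
def mycHom : G →g mycielskian G where
  toFun := Sum.inl
  map_rel' := by intro a b h; exact (myc_adj_vv G).mpr h

@[simp] lemma mycHom_apply (i : V) : mycHom G i = Sum.inl i := rfl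

end Adj

section Proj
variable {V : Type*} (G : SimpleGraph V)

def mycProj (d : V) : V ⊕ V ⊕ Unit → V := Sum.elim id (Sum.elim id (fun _ => d))

lemma myc_adj_proj (d : V) {x y : V ⊕ V ⊕ Unit} (h : (mycielskian G).Adj x y)
    (hx : x ≠ myW) (hy : y ≠ myW) : G.Adj (mycProj d x) (mycProj d y) := by
  rcases x with i | i | ⟨⟩
  · rcases y with j | j | ⟨⟩
    · exact (myc_adj_vv G).mp h
    · exact (myc_adj_vu G).mp h
    · exact absurd rfl hy
  · rcases y with j | j | ⟨⟩
    · exact ((myc_adj_uv G).mp h).symm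
    · exact absurd h (myc_adj_uu G)
    · exact absurd rfl hy
  · exact absurd rfl hx

lemma myc_walk_proj (d : V) {x y : V ⊕ V ⊕ Unit} (p : (mycielskian G).Walk x y)
    (hw : myW ∉ p.support) : ∃ q : G.Walk (mycProj d x) (mycProj d y), q.length = p.length := by
  induction p with
  | nil => exact ⟨SimpleGraph.Walk.nil, rfl⟩
  | cons h q ih =>
      rw [SimpleGraph.Walk.support_cons, List.mem_cons] at hw
      push_neg at hw
      obtain ⟨q', hq'⟩ := ih hw.2
      have hy' : _ ≠ myW := fun he => hw.2 (he ▸ q.start_mem_support)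
      exact ⟨SimpleGraph.Walk.cons (myc_adj_proj G d h (Ne.symm hw.1) hy') q',
        by simp [hq']⟩

/-- a walk between distinct nonadjacent vertices has length ≥ 2 -/
lemma two_le_length {W : Type*} {H : SimpleGraph W} {x y : W} (p : H.Walk x y)
    (hne : x ≠ y) (hna : ¬ H.Adj x y) : 2 ≤ p.length := by
  match p with
  | SimpleGraph.Walk.nil => exact absurd rfl hne
  | SimpleGraph.Walk.cons h SimpleGraph.Walk.nil => exact absurd h hna
  | SimpleGraph.Walk.cons h (SimpleGraph.Walk.cons h' q) => simp

lemma one_le_length {W : Type*} {H : SimpleGraph W} {x y : W} (p : H.Walk x y)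
    (hne : x ≠ y) : 1 ≤ p.length := by
  match p with
  | SimpleGraph.Walk.nil => exact absurd rfl hne
  | SimpleGraph.Walk.cons h q => simp

end Proj

section Dist
variable {V : Type*} {G : SimpleGraph V}

lemma exists_nbr [Fintype V] (hc : G.Connected) (h2 : 2 ≤ Fintype.card V) (i : V) :
    ∃ k, G.Adj i k := by
  obtain ⟨j, hj⟩ := Fintype.exists_ne_of_one_lt_card (by omega) i
  obtain ⟨p⟩ := hc.preconnected i j
  cases p with
  | nil => exact absurd rfl hj.symm
  | cons h q => exact ⟨_, h⟩

variable (hc : G.Connected) (hnb : ∀ i : V, ∃ k, G.Adj i k)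

local notation "M" => mycielskian G
local notation "vl" => (Sum.inl : V → V ⊕ V ⊕ Unit)

include hnb

omit hnb in
lemma myc_dist_wu (i : V) : (M).dist (myW : V ⊕ V ⊕ Unit) ((Sum.inr (Sum.inl i))) = 1 :=
  dist_eq_one_iff_adj.mpr (myc_adj_wu G)

lemma myc_dist_wv (i : V) : (M).dist (myW : V ⊕ V ⊕ Unit) (vl i) = 2 := by
  obtain ⟨k, hk⟩ := hnb i
  let pw : (M).Walk (myW : V ⊕ V ⊕ Unit) (vl i) :=
    SimpleGraph.Walk.cons (myc_adj_wu G (i := k))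
      (SimpleGraph.Walk.cons ((myc_adj_uv G).mpr hk) SimpleGraph.Walk.nil)
  have hpl : pw.length = 2 := rfl
  have hub := SimpleGraph.dist_le pw
  rw [hpl] at hub
  have hne : (myW : V ⊕ V ⊕ Unit) ≠ vl i := by simp [myW]
  obtain ⟨p, hp⟩ := (Reachable.exists_walk_length_eq_dist ⟨pw⟩ :)
  have := two_le_length p hne (myc_adj_wv G)
  omega

omit hnb in
lemma myc_dist_uu {i j : V} (hij : i ≠ j) : (M).dist ((Sum.inr (Sum.inl i))) ((Sum.inr (Sum.inl j))) = 2 := by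
  let pw : (M).Walk ((Sum.inr (Sum.inl i))) ((Sum.inr (Sum.inl j))) :=
    SimpleGraph.Walk.cons (myc_adj_uw G) (SimpleGraph.Walk.cons (myc_adj_wu G) SimpleGraph.Walk.nil)
  have hpl : pw.length = 2 := rfl
  have hub := SimpleGraph.dist_le pw
  rw [hpl] at hub
  have hne : ((Sum.inr (Sum.inl i)) : V ⊕ V ⊕ Unit) ≠ (Sum.inr (Sum.inl j)) := by simp [hij]
  obtain ⟨p, hp⟩ := (Reachable.exists_walk_length_eq_dist ⟨pw⟩ :)
  have := two_le_length p hne (myc_adj_uu G)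
  omega

lemma myc_dist_uv_same (i : V) : (M).dist ((Sum.inr (Sum.inl i))) (vl i) = 2 := by
  obtain ⟨k, hk⟩ := hnb i
  let pw : (M).Walk ((Sum.inr (Sum.inl i))) (vl i) :=
    SimpleGraph.Walk.cons ((myc_adj_uv G).mpr hk.symm)
      (SimpleGraph.Walk.cons ((myc_adj_vv G).mpr hk.symm) SimpleGraph.Walk.nil)
  have hpl : pw.length = 2 := rfl
  have hub := SimpleGraph.dist_le pw
  rw [hpl] at hub
  have hne : ((Sum.inr (Sum.inl i)) : V ⊕ V ⊕ Unit) ≠ vl i := by simp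
  have hna : ¬ (M).Adj ((Sum.inr (Sum.inl i))) (vl i) := by simp
  obtain ⟨p, hp⟩ := (Reachable.exists_walk_length_eq_dist ⟨pw⟩ :)
  have := two_le_length p hne hna
  omega

include hc

lemma myc_dist_vv (i j : V) : (M).dist (vl i) (vl j) = min (G.dist i j) 4 := by
  classical
  obtain ⟨k, hk⟩ := hnb i
  obtain ⟨l, hl⟩ := hnb j
  obtain ⟨q, hq⟩ := hc.exists_walk_length_eq_dist i j
  have hub1 : (M).dist (vl i) (vl j) ≤ G.dist i j := by
    have := SimpleGraph.dist_le (q.map (mycHom G))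
    rwa [SimpleGraph.Walk.length_map, hq] at this
  let pw : (M).Walk (vl i) (vl j) :=
    SimpleGraph.Walk.cons ((myc_adj_vu G).mpr hk)
      (SimpleGraph.Walk.cons (myc_adj_uw G)
        (SimpleGraph.Walk.cons (myc_adj_wu G)
          (SimpleGraph.Walk.cons ((myc_adj_uv G).mpr hl) SimpleGraph.Walk.nil)))
  have hpl : pw.length = 4 := rfl
  have hub2 := SimpleGraph.dist_le pw
  rw [hpl] at hub2
  refine le_antisymm (le_min hub1 hub2) ?_
  obtain ⟨p, hp⟩ := (Reachable.exists_walk_length_eq_dist ⟨pw⟩ :)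
  rcases Classical.em ((myW : V ⊕ V ⊕ Unit) ∈ p.support) with hw | hw
  · have hlen : (p.takeUntil _ hw).length + (p.dropUntil _ hw).length = p.length := by
      rw [← SimpleGraph.Walk.length_append, p.take_spec hw]
    have h1 := two_le_length (p.takeUntil _ hw) (by simp [myW]) (myc_adj_vw G)
    have h2 := two_le_length (p.dropUntil _ hw) (by simp [myW]) (myc_adj_wv G)
    omega
  · obtain ⟨q', hq'⟩ := myc_walk_proj G i p hw
    have := SimpleGraph.dist_le q'
    simp only [mycProj, Sum.elim_inl, id_eq] at this
    have h3 : G.dist i j ≤ q'.length := SimpleGraph.dist_le q'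
    omega

lemma myc_dist_uv_ne {i j : V} (hij : i ≠ j) :
    (M).dist ((Sum.inr (Sum.inl i))) (vl j) = min (G.dist i j) 3 := by
  classical
  obtain ⟨l, hl⟩ := hnb j
  obtain ⟨q, hq⟩ := hc.exists_walk_length_eq_dist i j
  have hub1 : (M).dist ((Sum.inr (Sum.inl i))) (vl j) ≤ G.dist i j := by
    cases q with
    | nil => exact absurd rfl hij
    | cons h q' =>
        have := SimpleGraph.dist_le
          (SimpleGraph.Walk.cons ((myc_adj_uv G).mpr h.symm) (q'.map (mycHom G)))
        simp only [SimpleGraph.Walk.length_cons, SimpleGraph.Walk.length_map,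
          mycHom_apply] at this
        simp only [SimpleGraph.Walk.length_cons] at hq
        have h5 : (M).dist ((Sum.inr (Sum.inl i))) (vl j) ≤ (q'.map (mycHom G)).length + 1 :=
          SimpleGraph.dist_le
            (SimpleGraph.Walk.cons ((myc_adj_uv G).mpr h.symm) (q'.map (mycHom G)))
        rw [SimpleGraph.Walk.length_map] at h5
        omega
  let pw : (M).Walk ((Sum.inr (Sum.inl i))) (vl j) :=
    SimpleGraph.Walk.cons (myc_adj_uw G)
      (SimpleGraph.Walk.cons (myc_adj_wu G)
        (SimpleGraph.Walk.cons ((myc_adj_uv G).mpr hl) SimpleGraph.Walk.nil))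
  have hpl : pw.length = 3 := rfl
  have hub2 := SimpleGraph.dist_le pw
  rw [hpl] at hub2
  refine le_antisymm (le_min hub1 hub2) ?_
  obtain ⟨p, hp⟩ := (Reachable.exists_walk_length_eq_dist ⟨pw⟩ :)
  rcases Classical.em ((myW : V ⊕ V ⊕ Unit) ∈ p.support) with hw | hw
  · have hlen : (p.takeUntil _ hw).length + (p.dropUntil _ hw).length = p.length := by
      rw [← SimpleGraph.Walk.length_append, p.take_spec hw]
    have h1 := one_le_length (p.takeUntil _ hw) (by simp [myW])
    have h2 := two_le_length (p.dropUntil _ hw) (by simp [myW]) (myc_adj_wv G)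
    omega
  · obtain ⟨q', hq'⟩ := myc_walk_proj G i p hw
    have := SimpleGraph.dist_le q'
    simp only [mycProj, Sum.elim_inl, Sum.elim_inr, id_eq] at this
    have h3 : G.dist i j ≤ q'.length := SimpleGraph.dist_le q'
    omega

end Dist

section Count
variable {V : Type*} [Fintype V] (G : SimpleGraph V)

open Classical in
lemma distCount_eq_filter (k : ℕ) :
    distCount G k = (Finset.univ.filter fun e : Sym2 V =>
      ¬ e.IsDiag ∧ Sym2.lift ⟨G.dist, fun _ _ => G.dist_comm⟩ e = k).card := by
  rw [distCount, Nat.card_eq_fintype_card, Fintype.card_subtype]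

open Classical in
lemma ord_count (k : ℕ) (hk : k ≠ 0) :
    (Finset.univ.filter fun p : V × V => G.dist p.1 p.2 = k).card = 2 * distCount G k := by
  rw [distCount_eq_filter]
  rw [Finset.card_eq_sum_card_fiberwise
    (f := (fun p : V × V => Sym2.mk p.1 p.2 : V × V → Sym2 V))
    (t := Finset.univ.filter fun e : Sym2 V =>
      ¬ e.IsDiag ∧ Sym2.lift ⟨G.dist, fun _ _ => G.dist_comm⟩ e = k) ?_]
  · rw [Finset.sum_congr rfl (g := fun _ => 2) ?_, Finset.sum_const, smul_eq_mul, mul_comm]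
    intro e he
    induction e with
    | _ a b =>
      simp only [Finset.mem_filter, Sym2.mk_isDiag_iff, Sym2.lift_mk] at he
      have hab : a ≠ b := he.2.1
      have : (Finset.univ.filter fun p : V × V => G.dist p.1 p.2 = k).filter
          (fun p => Sym2.mk p.1 p.2 = s(a, b)) = {(a, b), (b, a)} := by
        ext ⟨x, y⟩
        simp only [Finset.mem_filter, Finset.mem_univ, true_and, Finset.mem_insert,
          Finset.mem_singleton, Prod.mk.injEq, Sym2.eq_iff]
        constructor
        · rintro ⟨-, (⟨rfl, rfl⟩ | ⟨rfl, rfl⟩)⟩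
          · exact Or.inl ⟨rfl, rfl⟩
          · exact Or.inr ⟨rfl, rfl⟩
        · rintro (⟨rfl, rfl⟩ | ⟨rfl, rfl⟩)
          · exact ⟨he.2.2, Or.inl ⟨rfl, rfl⟩⟩
          · exact ⟨by rw [G.dist_comm]; exact he.2.2, Or.inr ⟨rfl, rfl⟩⟩
      rw [this]
      rw [Finset.card_insert_of_notMem (by simp [Prod.ext_iff, hab]), Finset.card_singleton]
  · intro p hp
    simp only [Finset.coe_filter, Set.mem_setOf_eq, Finset.mem_coe, Finset.mem_filter, Finset.mem_univ, true_and] at hp ⊢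
    refine ⟨?_, by simpa using hp⟩
    rw [Sym2.isDiag_iff_proj_eq]
    intro h
    rw [h, G.dist_self] at hp
    exact hk hp.symm

lemma edge_count (hc : G.Connected) : Nat.card G.edgeSet = distCount G 1 := by
  apply Nat.card_congr
  apply Equiv.subtypeEquivRight
  intro e
  induction e with
  | _ a b =>
    simp only [SimpleGraph.mem_edgeSet, Sym2.mk_isDiag_iff, Sym2.lift_mk]
    constructor
    · intro h; exact ⟨h.ne, SimpleGraph.dist_eq_one_iff_adj.mpr h⟩
    · intro h; exact SimpleGraph.dist_eq_one_iff_adj.mp h.2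

end Count

noncomputable def Fq (d : ℕ) : ℚ := (d:ℚ)^3/12 + (d:ℚ)^2/4 + (d:ℚ)/6

section Point
variable {V : Type*} {G : SimpleGraph V} (hc : G.Connected)
open Classical
include hc

lemma Fq_min4 (i j : V) : Fq (min (G.dist i j) 4) =
    (if i = j then 0 else 10) + (if G.dist i j = 1 then (-19/2 : ℚ) else 0)
      + (if G.dist i j = 2 then (-8 : ℚ) else 0)
      + (if G.dist i j = 3 then (-5 : ℚ) else 0) := by
  by_cases hij : i = j
  · subst hij
    rw [G.dist_self]
    norm_num [Fq]
  · have h1 : 1 ≤ G.dist i j := hc.pos_dist_of_ne hij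
    rw [if_neg hij]
    rcases Nat.lt_or_ge (G.dist i j) 4 with h | h
    · interval_cases h' : (G.dist i j) <;> norm_num [Fq]
    · have hm : min (G.dist i j) 4 = 4 := by omega
      rw [hm, if_neg (by omega), if_neg (by omega), if_neg (by omega)]
      norm_num [Fq]

lemma Fq_uvblock (i j : V) : Fq (if i = j then 2 else min (G.dist i j) 3) =
    (if i = j then 2 else 5) + (if G.dist i j = 1 then (-9/2 : ℚ) else 0)
      + (if G.dist i j = 2 then (-3 : ℚ) else 0) := by
  by_cases hij : i = j
  · subst hij
    rw [G.dist_self, if_pos rfl, if_pos rfl]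
    norm_num [Fq]
  · have h1 : 1 ≤ G.dist i j := hc.pos_dist_of_ne hij
    rw [if_neg hij, if_neg hij]
    rcases Nat.lt_or_ge (G.dist i j) 3 with h | h
    · interval_cases h' : (G.dist i j) <;> norm_num [Fq]
    · have hm : min (G.dist i j) 3 = 3 := by omega
      rw [hm, if_neg (by omega), if_neg (by omega)]
      norm_num [Fq]

omit hc in
lemma Fq_uublock (i j : V) : Fq (if i = j then 0 else 2) = (if i = j then (0:ℚ) else 2) := by
  by_cases hij : i = j <;> simp [hij, Fq] <;> norm_num

end Point

section Sums
variable {V : Type*} [Fintype V] (G : SimpleGraph V)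
open Classical

lemma sum_ite_diag (c : ℚ) :
    ∑ i : V, ∑ j : V, (if i = j then 0 else c) = c * ((Fintype.card V : ℚ)^2 - Fintype.card V) := by
  have : ∀ i : V, ∑ j : V, (if i = j then (0:ℚ) else c) = c * (Fintype.card V - 1) := by
    intro i
    have : ∀ j : V, (if i = j then (0:ℚ) else c) = c - (if i = j then c else 0) := by
      intro j; split <;> ring
    rw [Finset.sum_congr rfl fun j _ => this j, Finset.sum_sub_distrib, Finset.sum_const,
      Finset.sum_ite_eq, if_pos (Finset.mem_univ i), Finset.card_univ]
    push_cast; ring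
  rw [Finset.sum_congr rfl fun i _ => this i, Finset.sum_const, Finset.card_univ]
  push_cast; ring

lemma sum_ite_dist (k : ℕ) (hk : k ≠ 0) (c : ℚ) :
    ∑ i : V, ∑ j : V, (if G.dist i j = k then c else 0) = c * (2 * distCount G k) := by
  rw [← Finset.sum_product']
  rw [Finset.sum_ite, Finset.sum_const_zero, Finset.sum_const, add_zero]
  have := ord_count G k hk
  rw [show (Finset.univ ×ˢ Finset.univ : Finset (V × V)) = Finset.univ from
    Finset.univ_product_univ]
  rw [show (Finset.univ.filter fun p : V × V => G.dist p.1 p.2 = k).card = 2 * distCount G k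
    from this]
  push_cast
  ring

end Sums


/-- For a connected graph `G` with `n ≥ 2` vertices and `m` edges, with
`a_k = d(G,k)`, the TSZ index of `μ(G)` is `22n² - 13n - 37m - 28a₂ - 10a₃`. -/
theorem stmt_10 {V : Type*} [Fintype V] (G : SimpleGraph V) (n m : ℕ)
    (hn : Fintype.card V = n) (hn2 : 2 ≤ n) (hm : Nat.card G.edgeSet = m)
    (hc : G.Connected) :
    tszIndex (mycielskian G) =
      22 * (n : ℚ) ^ 2 - 13 * n - 37 * m - 28 * distCount G 2 - 10 * distCount G 3 := by
  classical
  have hnb : ∀ i : V, ∃ k, G.Adj i k := exists_nbr hc (by omega)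
  have key : tszIndex (mycielskian G) =
      ∑ x : V ⊕ V ⊕ Unit, ∑ y : V ⊕ V ⊕ Unit, Fq ((mycielskian G).dist x y) := by
    simp only [tszIndex, Fq, Finset.sum_add_distrib, Finset.sum_div]
  have e1 : ∀ i j : V, (mycielskian G).dist (Sum.inl i) (Sum.inl j) = min (G.dist i j) 4 :=
    fun i j => myc_dist_vv hc hnb i j
  have e2 : ∀ i j : V, (mycielskian G).dist (Sum.inl i) (Sum.inr (Sum.inl j))
      = if i = j then 2 else min (G.dist i j) 3 := by
    intro i j
    by_cases h : i = j
    · subst h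
      rw [if_pos rfl, SimpleGraph.dist_comm]
      exact myc_dist_uv_same hnb i
    · rw [if_neg h, SimpleGraph.dist_comm, myc_dist_uv_ne hc hnb (Ne.symm h), G.dist_comm]
  have e2' : ∀ i j : V, (mycielskian G).dist (Sum.inr (Sum.inl i)) (Sum.inl j)
      = if i = j then 2 else min (G.dist i j) 3 := by
    intro i j
    by_cases h : i = j
    · subst h
      rw [if_pos rfl]
      exact myc_dist_uv_same hnb i
    · rw [if_neg h]
      exact myc_dist_uv_ne hc hnb h
  have e3 : ∀ i j : V, (mycielskian G).dist (Sum.inr (Sum.inl i)) (Sum.inr (Sum.inl j))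
      = if i = j then 0 else 2 := by
    intro i j
    by_cases h : i = j
    · subst h; rw [if_pos rfl, SimpleGraph.dist_self]
    · rw [if_neg h]; exact myc_dist_uu h
  have e4 : ∀ (i : V) (u : Unit),
      (mycielskian G).dist (Sum.inl i) (Sum.inr (Sum.inr u)) = 2 := by
    intro i u
    rw [SimpleGraph.dist_comm]
    exact myc_dist_wv hnb i
  have e4' : ∀ (u : Unit) (i : V),
      (mycielskian G).dist (Sum.inr (Sum.inr u)) (Sum.inl i) = 2 := fun u i => myc_dist_wv hnb i
  have e5 : ∀ (i : V) (u : Unit),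
      (mycielskian G).dist (Sum.inr (Sum.inl i)) (Sum.inr (Sum.inr u)) = 1 := by
    intro i u
    rw [SimpleGraph.dist_comm]
    exact myc_dist_wu i
  have e5' : ∀ (u : Unit) (i : V),
      (mycielskian G).dist (Sum.inr (Sum.inr u)) (Sum.inr (Sum.inl i)) = 1 :=
    fun u i => myc_dist_wu i
  have e6 : ∀ (u u' : Unit),
      (mycielskian G).dist (Sum.inr (Sum.inr u)) (Sum.inr (Sum.inr u')) = 0 := by
    rintro ⟨⟩ ⟨⟩
    rw [SimpleGraph.dist_self]
  have hF0 : Fq 0 = 0 := by norm_num [Fq]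
  have hF1 : Fq 1 = 1/2 := by norm_num [Fq]
  have hF2 : Fq 2 = 2 := by norm_num [Fq]
  have B1 : ∑ i : V, ∑ j : V, Fq (min (G.dist i j) 4) =
      10 * ((n:ℚ)^2 - n) - (19/2) * (2 * distCount G 1)
        - 8 * (2 * distCount G 2) - 5 * (2 * distCount G 3) := by
    rw [Finset.sum_congr rfl fun i _ => Finset.sum_congr rfl fun j _ => Fq_min4 hc i j]
    simp only [Finset.sum_add_distrib]
    rw [sum_ite_diag, sum_ite_dist G 1 one_ne_zero, sum_ite_dist G 2 two_ne_zero,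
      sum_ite_dist G 3 three_ne_zero, hn]
    ring
  have B2 : ∑ i : V, ∑ j : V, Fq (if i = j then 2 else min (G.dist i j) 3) =
      3 * ((n:ℚ)^2 - n) + 2 * (n:ℚ)^2 - (9/2) * (2 * distCount G 1)
        - 3 * (2 * distCount G 2) := by
    rw [Finset.sum_congr rfl fun i _ => Finset.sum_congr rfl fun j _ => Fq_uvblock hc i j]
    have hsp : ∀ i j : V, (if i = j then (2:ℚ) else 5)
        = (if i = j then (0:ℚ) else 3) + 2 := by
      intro i j; split <;> norm_num
    simp only [hsp]
    simp only [Finset.sum_add_distrib, Finset.sum_const, Finset.card_univ, hn, nsmul_eq_mul]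
    rw [sum_ite_diag, sum_ite_dist G 1 one_ne_zero, sum_ite_dist G 2 two_ne_zero, hn]
    ring
  have B3 : ∑ i : V, ∑ j : V, Fq (if i = j then 0 else 2) = 2 * ((n:ℚ)^2 - n) := by
    rw [Finset.sum_congr rfl fun i _ => Finset.sum_congr rfl fun j _ => Fq_uublock i j]
    rw [sum_ite_diag, hn]
  have hm1 : m = distCount G 1 := by rw [← hm, edge_count G hc]
  rw [key]
  simp only [Fintype.sum_sum_type, Fintype.sum_unique, e1, e2, e2', e3, e4, e4', e5, e5', e6]
  simp only [hF0, hF1, hF2, Finset.sum_add_distrib, Finset.sum_const, Finset.card_univ, hn,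
    nsmul_eq_mul]
  rw [B1, B2, B3, hm1]
  push_cast
  ring
end
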